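/- For every i ≥ 0 and n = 2^i, there exists a solution w to the 1-out-of-n picture-hanging puzzle with |w| = n² = 4^i, namely the balanced commutator tree defined recursively: on a single generator the word is that generator, and on 2m generators it is the commutator ⁅A, B⁆ = A·B·A⁻¹·B⁻¹ where A is the balanced commutator tree word on the first m generators and B is the balanced commutator tree word on the last m generators. -/

import Mathlib

/-- The removal homomorphism: kills the generators with index in `S`. -/
def kill {n : ℕ} (S : Finset (Fin n)) : FreeGroup (Fin n) →* FreeGroup (Fin n) :=
  FreeGroup.lift fun i => if i ∈ S then 1 else FreeGroup.of i

/-- `w` is a solution to the `k`-out-of-`n` picture-hanging puzzle (Demaine convention). -/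
def IsSolution {n : ℕ} (k : ℕ) (w : FreeGroup (Fin n)) : Prop :=
  ∀ S : Finset (Fin n),
    (k ≤ S.card → kill S w = 1) ∧ (S.card < k → kill S w ≠ 1)

open scoped commutatorElement

/-- The balanced commutator tree word on the `2^i` generators `lo, lo+1, …, lo+2^i-1`
(as a word in the free group on ℕ-indexed generators):
a single generator at depth `0`, and at depth `i+1` the commutator of the balanced
commutator tree words on the first and last `2^i` generators. -/
def balancedCommTree : ℕ → ℕ → FreeGroup ℕ
  | lo, 0 => FreeGroup.of lo
  | lo, i + 1 => ⁅balancedCommTree lo i, balancedCommTree (lo + 2 ^ i) i⁆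

/-- Reindex a word on ℕ-indexed generators as a word in `FreeGroup (Fin n)`
(generators with index `≥ n` are sent to `1`; `balancedCommTree 0 i` only uses
indices `< 2^i`). -/
def toFin (n : ℕ) : FreeGroup ℕ →* FreeGroup (Fin n) :=
  FreeGroup.lift fun m => if h : m < n then FreeGroup.of ⟨m, h⟩ else 1


open FreeGroup List

/-- The letter list of the balanced commutator tree. -/
def W : ℕ → ℕ → List (ℕ × Bool)
  | lo, 0 => [(lo, true)]
  | lo, i + 1 =>
      W lo i ++ W (lo + 2 ^ i) i ++ FreeGroup.invRev (W lo i) ++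
        FreeGroup.invRev (W (lo + 2 ^ i) i)

lemma mk_W (lo i : ℕ) : balancedCommTree lo i = FreeGroup.mk (W lo i) := by
  induction i generalizing lo with
  | zero => rfl
  | succ i ih =>
    simp only [balancedCommTree, W, commutatorElement_def, ih, FreeGroup.inv_mk,
      FreeGroup.mul_mk, List.append_assoc]

lemma length_W (lo i : ℕ) : (W lo i).length = 4 ^ i := by
  induction i generalizing lo with
  | zero => rfl
  | succ i ih => simp [W, FreeGroup.invRev_length, ih, pow_succ]; ring

lemma mem_invRev {L : List (ℕ × Bool)} {p : ℕ × Bool} :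
    p ∈ FreeGroup.invRev L ↔ (p.1, !p.2) ∈ L := by
  simp only [FreeGroup.invRev, List.mem_reverse, List.mem_map]
  constructor
  · rintro ⟨a, ha, rfl⟩; simpa using ha
  · intro h; exact ⟨(p.1, !p.2), h, by simp⟩

lemma mem_W {lo i : ℕ} {p : ℕ × Bool} (h : p ∈ W lo i) : lo ≤ p.1 ∧ p.1 < lo + 2 ^ i := by
  induction i generalizing lo p with
  | zero => simp [W] at h; simp [h]
  | succ i ih =>
    simp only [W, List.mem_append, mem_invRev] at h
    have h2 : (2 : ℕ) ^ i ≤ 2 ^ (i + 1) := Nat.pow_le_pow_right (by norm_num) (by omega)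
    rcases h with ((h | h) | h) | h
    · have := ih h; omega
    · have := ih (lo := lo + 2 ^ i) h; rw [pow_succ]; omega
    · have := ih (p := (p.1, !p.2)) h; omega
    · have := ih (p := (p.1, !p.2)) (lo := lo + 2 ^ i) h; rw [pow_succ]; omega

lemma W_ne_nil (lo i : ℕ) : W lo i ≠ [] := by
  have := length_W lo i
  have h4 : (0:ℕ) < 4 ^ i := Nat.pow_pos (by norm_num)
  intro h; rw [h] at this; simp at this; omega

lemma chain_invRev {L : List (ℕ × Bool)}
    (h : List.Chain' (fun a b : ℕ × Bool => a.1 ≠ b.1) L) :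
    List.Chain' (fun a b : ℕ × Bool => a.1 ≠ b.1) (FreeGroup.invRev L) := by
  rw [FreeGroup.invRev, List.Chain', List.isChain_reverse]
  exact List.isChain_map_of_isChain _ (fun a b hab => fun e => hab e.symm)
    (List.IsChain.imp (fun a b hab => hab) h)

lemma invRev_ne_nil {lo i : ℕ} : FreeGroup.invRev (W lo i) ≠ [] := by
  intro h
  have := FreeGroup.invRev_length (L₁ := W lo i)
  rw [h, length_W] at this
  have h4 : (0:ℕ) < 4 ^ i := Nat.pow_pos (by norm_num)
  simp at this; omega

lemma mem_W_or {lo i : ℕ} {p : ℕ × Bool}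
    (hp : p ∈ W lo i ∨ p ∈ FreeGroup.invRev (W lo i)) :
    lo ≤ p.1 ∧ p.1 < lo + 2 ^ i := by
  rcases hp with hp | hp
  · exact mem_W hp
  · simpa using mem_W (mem_invRev.mp hp)

lemma chain_W (lo i : ℕ) :
    List.Chain' (fun a b : ℕ × Bool => a.1 ≠ b.1) (W lo i) := by
  induction i generalizing lo with
  | zero => simp [W, List.Chain']
  | succ i ih =>
    have hA := ih lo
    have hB := ih (lo + 2 ^ i)
    rw [W]
    refine (((hA.append hB ?_).append (chain_invRev hA) ?_).append (chain_invRev hB) ?_)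
    · intro x hx y hy
      have h1 := mem_W_or (p := x) (Or.inl (List.mem_of_mem_getLast? hx))
      have h2 := mem_W_or (lo := lo + 2 ^ i) (p := y) (Or.inl (List.mem_of_mem_head? hy))
      omega
    · intro x hx y hy
      rw [List.getLast?_append_of_ne_nil _ (W_ne_nil _ _)] at hx
      have h1 := mem_W_or (lo := lo + 2 ^ i) (p := x) (Or.inl (List.mem_of_mem_getLast? hx))
      have h2 := mem_W_or (lo := lo) (p := y) (Or.inr (List.mem_of_mem_head? hy))
      omega
    · intro x hx y hy
      rw [List.getLast?_append_of_ne_nil _ invRev_ne_nil] at hx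
      have h1 := mem_W_or (lo := lo) (p := x) (Or.inr (List.mem_of_mem_getLast? hx))
      have h2 := mem_W_or (lo := lo + 2 ^ i) (p := y) (Or.inr (List.mem_of_mem_head? hy))
      omega

lemma reduce_eq_self {α : Type*} [DecidableEq α] {L : List (α × Bool)}
    (h : List.Chain' (fun a b : α × Bool => ¬(a.1 = b.1 ∧ a.2 = !b.2)) L) :
    FreeGroup.reduce L = L := by
  induction L with
  | nil => simp
  | cons x L ih =>
    have hL := ih h.tail
    rw [FreeGroup.reduce.cons, hL]
    cases L with
    | nil => rfl
    | cons y t =>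
      have hxy : ¬(x.1 = y.1 ∧ x.2 = !y.2) := (List.isChain_cons_cons.mp h).1
      simp [hxy]

lemma chain'_imp_mem {β : Type*} {R S : β → β → Prop} {Q : β → Prop} :
    ∀ {L : List β}, List.Chain' R L → (∀ p ∈ L, Q p) →
      (∀ a b, Q a → Q b → R a b → S a b) → List.Chain' S L := by
  intro L
  induction L with
  | nil => intros; simp [List.Chain']
  | cons x L ih =>
    cases L with
    | nil => intros; simp [List.Chain']
    | cons y t =>
      intro h hq himp
      rw [List.Chain', List.isChain_cons_cons] at h ⊢
      refine ⟨himp _ _ (hq x (by simp)) (hq y (by simp)) h.1,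
        ih h.2 (fun p hp => hq p (List.mem_cons_of_mem _ hp)) himp⟩

lemma toFin_eq_map {n : ℕ} (hn : 0 < n) (j lo : ℕ) (hle : lo + 2 ^ j ≤ n) :
    toFin n (balancedCommTree lo j) =
      FreeGroup.map (fun m => (⟨m % n, Nat.mod_lt m hn⟩ : Fin n)) (balancedCommTree lo j) := by
  induction j generalizing lo with
  | zero =>
    have hlo : lo < n := by simp at hle; omega
    simp only [balancedCommTree, toFin, FreeGroup.lift_apply_of, FreeGroup.map.of, hlo, dif_pos]
    congr 1
    exact Fin.ext (by simp [Nat.mod_eq_of_lt hlo])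
  | succ j ih =>
    have h2 : lo + 2 ^ j + 2 ^ j ≤ n := by rw [pow_succ] at hle; omega
    have e1 := ih lo (le_trans (Nat.le_add_right _ _) h2)
    have e2 := ih (lo + 2 ^ j) h2
    simp only [balancedCommTree, commutatorElement_def, MonoidHom.map_mul,
      MonoidHom.map_inv, e1, e2]

theorem one_out_of_n_balanced_tree (i : ℕ) :
    IsSolution 1 (toFin (2 ^ i) (balancedCommTree 0 i)) ∧
    FreeGroup.norm (toFin (2 ^ i) (balancedCommTree 0 i)) = 4 ^ i := by
  have hn : 0 < 2 ^ i := Nat.pow_pos (by norm_num)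
  have hnorm : FreeGroup.norm (toFin (2 ^ i) (balancedCommTree 0 i)) = 4 ^ i := by
    rw [toFin_eq_map hn i 0 (by omega), mk_W, FreeGroup.map.mk]
    have hmem : ∀ p ∈ W 0 i, p.1 < 2 ^ i := fun p hp => by have := mem_W hp; omega
    have hchain' : List.Chain' (fun a b : ℕ × Bool =>
        ¬((⟨a.1 % 2 ^ i, Nat.mod_lt _ hn⟩ : Fin (2 ^ i)) = ⟨b.1 % 2 ^ i, Nat.mod_lt _ hn⟩
          ∧ a.2 = !b.2)) (W 0 i) := by
      refine chain'_imp_mem (chain_W 0 i) hmem ?_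
      rintro a b ha hb hr ⟨h1, _⟩
      apply hr
      have := Fin.mk.injEq _ _ _ _ ▸ h1
      rw [Nat.mod_eq_of_lt ha, Nat.mod_eq_of_lt hb] at this
      exact this
    have hred := reduce_eq_self ((List.isChain_map
      (fun x : ℕ × Bool => ((⟨x.1 % 2 ^ i, Nat.mod_lt _ hn⟩ : Fin (2 ^ i)), x.2))).2 hchain')
    simp only [FreeGroup.norm, FreeGroup.toWord_mk, hred, List.length_map, length_W]
  refine ⟨?_, hnorm⟩
  intro S
  constructor
  · intro hcard
    obtain ⟨j, hj⟩ := Finset.card_pos.mp (Nat.lt_of_lt_of_le Nat.zero_lt_one hcard)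
    have main : ∀ m lo, lo ≤ (j : ℕ) → (j : ℕ) < lo + 2 ^ m →
        kill S (toFin (2 ^ i) (balancedCommTree lo m)) = 1 := by
      intro m
      induction m with
      | zero =>
        intro lo h1 h2
        simp only [pow_zero] at h2
        have hlo : (j : ℕ) = lo := by omega
        have hlon : lo < 2 ^ i := hlo ▸ j.isLt
        have hbc : balancedCommTree lo 0 = FreeGroup.of lo := rfl
        rw [hbc]
        have htf : toFin (2 ^ i) (FreeGroup.of lo) = FreeGroup.of (⟨lo, hlon⟩ : Fin (2 ^ i)) := by
          rw [show toFin (2 ^ i) (FreeGroup.of lo) =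
            (if h : lo < 2 ^ i then FreeGroup.of (⟨lo, h⟩ : Fin (2 ^ i)) else 1) from
            FreeGroup.lift_apply_of, dif_pos hlon]
        rw [htf]
        have hjj : (⟨lo, hlon⟩ : Fin (2 ^ i)) = j := Fin.ext (by simp [hlo])
        rw [hjj]
        rw [show kill S (FreeGroup.of j) =
          (if j ∈ S then 1 else FreeGroup.of j) from FreeGroup.lift_apply_of, if_pos hj]
      | succ m ih =>
        intro lo h1 h2
        have hbc : balancedCommTree lo (m + 1) =
            ⁅balancedCommTree lo m, balancedCommTree (lo + 2 ^ m) m⁆ := rfl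
        rw [hbc, commutatorElement_def]
        by_cases hc : (j : ℕ) < lo + 2 ^ m
        · have h0 := ih lo h1 hc
          simp only [MonoidHom.map_mul, MonoidHom.map_inv, h0]
          group
        · have h0 := ih (lo + 2 ^ m) (by omega) (by rw [pow_succ] at h2; omega)
          simp only [MonoidHom.map_mul, MonoidHom.map_inv, h0]
          group
    exact main i 0 (Nat.zero_le _) (by simp)
  · intro hcard
    have hS : S = ∅ := Finset.card_eq_zero.mp (by omega)
    subst hS
    have hid : kill (∅ : Finset (Fin (2 ^ i))) (toFin (2 ^ i) (balancedCommTree 0 i)) =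
        toFin (2 ^ i) (balancedCommTree 0 i) := by
      have hfun : (fun x : Fin (2 ^ i) => if x ∈ (∅ : Finset (Fin (2 ^ i))) then 1
          else FreeGroup.of x) = FreeGroup.of := funext fun x => by simp
      show FreeGroup.lift (fun x : Fin (2 ^ i) => if x ∈ (∅ : Finset (Fin (2 ^ i))) then 1
          else FreeGroup.of x) _ = _
      rw [hfun]
      exact FreeGroup.lift_of_apply _
    rw [hid]
    intro h1
    rw [h1, FreeGroup.norm_one] at hnorm
    exact (pow_pos (by norm_num : (0:ℕ) < 4) i).ne' hnorm.symm
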